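/- For a bounded-zigzag Turing machine T, the column subshift S_H (observing cell 0 of the moving-head system T_H) is sofic: its language of finite factors is regular. -/

import Mathlib

/-- A Turing machine with tape alphabet `A`, state set `Q`, and rule
`δ : A × Q → A × Q × {-1,1}` (the direction is encoded by a `Bool`). -/
structure TuringMachine (A Q : Type*) where
  δ : A → Q → A × Q × Bool

namespace TuringMachine

variable {A Q : Type*}

/-- Direction of a move: `true ↦ +1`, `false ↦ -1`. -/
def dir (b : Bool) : ℤ := if b then 1 else -1

/-- A configuration: tape contents, head state, head position. -/
abbrev Config (A Q : Type*) := (ℤ → A) × Q × ℤ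

/-- One step of the machine on `X = A^ℤ × Q × ℤ`. -/
def step (M : TuringMachine A Q) (c : Config A Q) : Config A Q :=
  let r := M.δ (c.1 c.2.2) c.2.1
  (Function.update c.1 c.2.2 r.1, r.2.1, c.2.2 + dir r.2.2)

/-- Head position after `t` steps. -/
def pos (M : TuringMachine A Q) (t : ℕ) (c : Config A Q) : ℤ :=
  ((M.step)^[t] c).2.2

/-- `c` is preperiodic for the machine. -/
def Preperiodic (M : TuringMachine A Q) (c : Config A Q) : Prop :=
  ∃ m p : ℕ, 0 < p ∧ (M.step)^[m + p] c = (M.step)^[m] c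

end TuringMachine

namespace TuringMachine

variable {A Q : Type*}

/-- Alphabet of the moving-head system: a tape letter, or a tape letter marked
with the head together with its state. -/
abbrev Cell (A Q : Type*) := A ⊕ (A × Q)

/-- A cell carries the head. -/
def isHead {A Q : Type*} (b : Cell A Q) : Prop := ∃ p : A × Q, b = Sum.inr p

/-- Membership in the moving-head phase space X_H: at most one marked cell. -/
def XHmem (x : ℤ → Cell A Q) : Prop :=
  Set.Subsingleton {i : ℤ | isHead (x i)}

/-- One step of the moving-head system T_H on (A ⊔ (A × Q))^ℤ: if there is a
head, apply the rule of the machine at the marked cell (write, change state, and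
move the mark by ±1); otherwise do nothing. -/
noncomputable def hstep (M : TuringMachine A Q) (x : ℤ → Cell A Q) :
    ℤ → Cell A Q := by
  classical
  exact if h : ∃ i : ℤ, ∃ b : A, ∃ q : Q, x i = Sum.inr (b, q) then
    let i := h.choose
    let b := h.choose_spec.choose
    let q := h.choose_spec.choose_spec.choose
    let r := M.δ b q
    let y := Function.update x i (Sum.inl r.1)
    let j := i + dir r.2.2
    Function.update y j
      (match y j with
        | Sum.inl c => Sum.inr (c, r.2.1)
        | Sum.inr (c, _) => Sum.inr (c, r.2.1))
  else x

/-- The column observed at cell 0, defining the subshift S_H. -/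
noncomputable def tauH (M : TuringMachine A Q) (x : ℤ → Cell A Q) (t : ℕ) :
    Cell A Q :=
  ((M.hstep)^[t] x) 0

/-- The language of finite factors of the column subshift S_H. -/
noncomputable def langSH (M : TuringMachine A Q) : Language (Cell A Q) :=
  {w : List (Cell A Q) | ∃ x : ℤ → Cell A Q, XHmem x ∧ ∃ m : ℕ,
    ∀ j : ℕ, ∀ hj : j < w.length, w.get ⟨j, hj⟩ = M.tauH x (m + j)}

end TuringMachine

section Aux

namespace TuringMachine

variable {A Q : Type*} (M : TuringMachine A Q)

lemma dir_ne_zero (b : Bool) : dir b ≠ 0 := by cases b <;> simp [dir]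

lemma hstep_formula (x : ℤ → Cell A Q) (i : ℤ) (b : A) (q : Q)
    (hx : x i = Sum.inr (b, q))
    (huniq : ∀ j b' q', x j = Sum.inr (b', q') → j = i) :
    M.hstep x =
      Function.update (Function.update x i (Sum.inl (M.δ b q).1))
        (i + dir (M.δ b q).2.2)
        (match Function.update x i (Sum.inl (M.δ b q).1) (i + dir (M.δ b q).2.2) with
          | Sum.inl c => Sum.inr (c, (M.δ b q).2.1)
          | Sum.inr (c, _) => Sum.inr (c, (M.δ b q).2.1)) := by
  classical
  have hex : ∃ i b q, x i = Sum.inr (b, q) := ⟨i, b, q, hx⟩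
  have hspec := hex.choose_spec.choose_spec.choose_spec
  simp only [hstep, dif_pos hex]
  generalize hq0 : hex.choose_spec.choose_spec.choose = q0 at hspec ⊢
  generalize hb0 : hex.choose_spec.choose = b0 at hspec ⊢
  generalize hi0 : hex.choose = i0 at hspec ⊢
  have hii : i0 = i := huniq _ _ _ hspec
  subst hii
  rw [hx] at hspec
  obtain ⟨hb, hq⟩ : b0 = b ∧ q0 = q := by
    have := hspec.symm
    simp only [Sum.inr.injEq, Prod.mk.injEq] at this
    exact this
  subst hb; subst hq
  rfl

/-- Embed a machine configuration as a point of X_H. -/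
noncomputable def embed (c : Config A Q) : ℤ → Cell A Q :=
  fun k => if k = c.2.2 then Sum.inr (c.1 c.2.2, c.2.1) else Sum.inl (c.1 k)

lemma embed_head {c : Config A Q} {i : ℤ} (h : isHead (embed c i)) : i = c.2.2 := by
  by_contra hne
  obtain ⟨p, hp⟩ := h
  simp [embed, hne] at hp

lemma XHmem_embed (c : Config A Q) : XHmem (embed c) :=
  fun _ hi _ hj => (embed_head hi).trans (embed_head hj).symm

lemma hstep_embed (c : Config A Q) : M.hstep (embed c) = embed (M.step c) := by
  classical
  obtain ⟨y, q, i⟩ := c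
  have hx : embed (y, q, i) i = Sum.inr (y i, q) := by simp [embed]
  rw [M.hstep_formula (embed (y, q, i)) i (y i) q hx
    (fun j b' q' h => embed_head ⟨_, h⟩)]
  set r := M.δ (y i) q with hr
  have hj : i + dir r.2.2 ≠ i := by
    have := dir_ne_zero r.2.2; omega
  have hyj : Function.update (embed (y, q, i)) i (Sum.inl r.1) (i + dir r.2.2)
      = Sum.inl (y (i + dir r.2.2)) := by
    rw [Function.update_of_ne hj]
    simp [embed, hj]
  rw [hyj]
  funext k
  simp only [step, Function.update_apply, embed]
  rcases eq_or_ne k (i + dir r.2.2) with h1 | h1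
  · simp [h1, ← hr, Function.update_of_ne hj, dir_ne_zero r.2.2]
  · rcases eq_or_ne k i with h2 | h2
    · simp [h2, h1, ← hr, Ne.symm hj, dir_ne_zero r.2.2]
    · simp [h1, h2, ← hr, dir_ne_zero r.2.2]

lemma hstep_iterate_embed (c : Config A Q) (t : ℕ) :
    (M.hstep)^[t] (embed c) = embed ((M.step)^[t] c) := by
  induction t with
  | zero => rfl
  | succ t ih =>
      rw [Function.iterate_succ_apply', ih, hstep_embed,
        show (M.step)^[t+1] c = M.step ((M.step)^[t] c) from Function.iterate_succ_apply' _ _ _]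

/-- Column of a configuration. -/
noncomputable def colC (c : Config A Q) (t : ℕ) : Cell A Q := embed ((M.step)^[t] c) 0

lemma tauH_embed (c : Config A Q) (t : ℕ) : M.tauH (embed c) t = M.colC c t := by
  rw [tauH, hstep_iterate_embed]; rfl

lemma colC_shift (c : Config A Q) (m t : ℕ) :
    M.colC c (m + t) = M.colC ((M.step)^[m] c) t := by
  rw [colC, colC, add_comm, Function.iterate_add_apply]

lemma hstep_headless (x : ℤ → Cell A Q) (h : ∀ i, ¬ isHead (x i)) : M.hstep x = x := by
  rw [hstep, dif_neg]
  rintro ⟨i, b, q, hi⟩; exact h i ⟨(b, q), hi⟩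

lemma tauH_headless (x : ℤ → Cell A Q) (h : ∀ i, ¬ isHead (x i)) (t : ℕ) :
    M.tauH x t = x 0 := by
  rw [tauH, Function.iterate_fixed (M.hstep_headless x h)]

lemma XH_cases (x : ℤ → Cell A Q) (hx : XHmem x) :
    (∀ i, ¬ isHead (x i)) ∨ ∃ c : Config A Q, x = embed c := by
  classical
  by_cases h : ∃ i, isHead (x i)
  · obtain ⟨i, ⟨⟨b, q⟩, hbq⟩⟩ := h
    refine Or.inr ⟨(fun k => Sum.elim id Prod.fst (x k), q, i), ?_⟩
    funext k
    rcases eq_or_ne k i with rfl | hk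
    · simp [embed, hbq]
    · have : ¬ isHead (x k) := fun hh => hk (hx hh ⟨(b, q), hbq⟩)
      rcases hxk : x k with a | p
      · simp [embed, hk, hxk]
      · exact absurd ⟨p, hxk⟩ this
  · exact Or.inl (fun i hi => h ⟨i, hi⟩)

lemma pos_zero (c : Config A Q) : M.pos 0 c = c.2.2 := rfl

lemma pos_succ (c : Config A Q) (t : ℕ) :
    M.pos (t + 1) c = M.pos t c + 1 ∨ M.pos (t + 1) c = M.pos t c - 1 := by
  rw [pos, Function.iterate_succ_apply']
  rcases Bool.dichotomy (M.δ (((M.step)^[t] c).1 ((M.step)^[t] c).2.2)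
      ((M.step)^[t] c).2.1).2.2 with h | h <;>
    [right; left] <;> simp [step, pos, dir, h, sub_eq_add_neg]

lemma tape_succ (c : Config A Q) (t : ℕ) (k : ℤ) (h : M.pos t c ≠ k) :
    ((M.step)^[t + 1] c).1 k = ((M.step)^[t] c).1 k := by
  rw [Function.iterate_succ_apply', step]
  exact Function.update_of_ne (fun hh => h hh.symm) _ _

lemma tape_freeze (c : Config A Q) (k : ℤ) (t₁ t₂ : ℕ) (h12 : t₁ ≤ t₂)
    (h : ∀ s, t₁ ≤ s → s < t₂ → M.pos s c ≠ k) :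
    ((M.step)^[t₂] c).1 k = ((M.step)^[t₁] c).1 k := by
  induction t₂ with
  | zero => simp [Nat.le_zero.mp h12]
  | succ t ih =>
      rcases Nat.lt_or_ge t₁ (t + 1) with hlt | hge
      · have ht : t₁ ≤ t := by omega
        rw [M.tape_succ c t k (h t ht (by omega)), ih ht (fun s h1 h2 => h s h1 (by omega))]
      · have : t₁ = t + 1 := by omega
        rw [this]

lemma colC_of_pos_ne (c : Config A Q) (t : ℕ) (h : M.pos t c ≠ 0) :
    M.colC c t = Sum.inl (((M.step)^[t] c).1 0) := by
  rw [colC, embed, if_neg (fun hh => h hh.symm)]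

lemma colC_of_pos_eq (c : Config A Q) (t : ℕ) (h : M.pos t c = 0) :
    M.colC c t = Sum.inr (((M.step)^[t] c).1 0, ((M.step)^[t] c).2.1) := by
  rw [pos] at h
  rw [colC, embed, if_pos h.symm, h]

/-- The bounded-zigzag property with bound `N`. -/
def ZZ (M : TuringMachine A Q) (N : ℕ) : Prop :=
  ∀ (x : Config A Q) (i : ℤ) (W t₁ t₂ : ℕ),
    N < W → 0 < t₁ → t₁ < t₂ → x.2.2 = i →
    (M.pos t₁ x = i + W ∨ M.pos t₁ x = i - W) → M.pos t₂ x ≠ i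

variable {N : ℕ}

lemma confine (hz : M.ZZ N) (c : Config A Q) (h0 : c.2.2 = 0) (E : ℕ)
    (hE : M.pos E c ∉ Set.Icc (-(N:ℤ)) N)
    (hprev : ∀ s, s < E → M.pos s c ∈ Set.Icc (-(N:ℤ)) N) :
    ∀ t, E ≤ t → M.pos t c ≠ 0 := by
  have hE0 : E ≠ 0 := by
    rintro rfl
    exact hE (by simp [pos_zero, h0, Set.mem_Icc])
  obtain ⟨E', rfl⟩ : ∃ E', E = E' + 1 := ⟨E - 1, by omega⟩
  have hprev' := hprev E' (by omega)
  simp only [Set.mem_Icc, not_and_or, not_le] at hE hprev'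
  have hcase : M.pos (E' + 1) c = (N:ℤ) + 1 ∨ M.pos (E' + 1) c = -((N:ℤ) + 1) := by
    rcases M.pos_succ c E' with h | h <;> omega
  intro t ht
  rcases Nat.eq_or_lt_of_le ht with rfl | hlt
  · rcases hcase with h | h <;> omega
  · refine hz c 0 (N + 1) (E' + 1) t (by omega) (by omega) hlt h0 ?_
    push_cast
    rcases hcase with h | h
    · exact Or.inl (by omega)
    · exact Or.inr (by omega)

lemma local_inv (c d : Config A Q) (hq : c.2.1 = d.2.1) (hp : c.2.2 = d.2.2)
    (ht : ∀ k ∈ Set.Icc (-(N:ℤ)) N, c.1 k = d.1 k) (t : ℕ)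
    (hin : ∀ s, s < t → M.pos s c ∈ Set.Icc (-(N:ℤ)) N) :
    ((M.step)^[t] c).2.1 = ((M.step)^[t] d).2.1 ∧
    ((M.step)^[t] c).2.2 = ((M.step)^[t] d).2.2 ∧
    ∀ k ∈ Set.Icc (-(N:ℤ)) N, ((M.step)^[t] c).1 k = ((M.step)^[t] d).1 k := by
  induction t with
  | zero => exact ⟨hq, hp, ht⟩
  | succ t ih =>
    obtain ⟨ihq, ihp, iht⟩ := ih (fun s hs => hin s (by omega))
    have hpt : ((M.step)^[t] c).2.2 ∈ Set.Icc (-(N:ℤ)) N := hin t (by omega)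
    have hread : ((M.step)^[t] c).1 ((M.step)^[t] c).2.2
        = ((M.step)^[t] d).1 ((M.step)^[t] d).2.2 := by
      rw [← ihp]; exact iht _ hpt
    refine ⟨?_, ?_, ?_⟩
    · simp only [Function.iterate_succ_apply', step]
      rw [hread, ihq]
    · simp only [Function.iterate_succ_apply', step]
      rw [hread, ihq, ihp]
    · intro k hk
      simp only [Function.iterate_succ_apply', step, Function.update_apply]
      rw [hread, ihq, ihp]
      split_ifs with h
      · rfl
      · exact iht k hk

lemma colC_agree (hz : M.ZZ N) (c d : Config A Q) (hc0 : c.2.2 = 0) (hd0 : d.2.2 = 0)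
    (hq : c.2.1 = d.2.1) (ht : ∀ k ∈ Set.Icc (-(N:ℤ)) N, c.1 k = d.1 k) (t : ℕ) :
    M.colC c t = M.colC d t := by
  classical
  have h0win : (0:ℤ) ∈ Set.Icc (-(N:ℤ)) N := by simp [Set.mem_Icc]
  have hsame : ∀ t', (∀ s, s < t' → M.pos s c ∈ Set.Icc (-(N:ℤ)) N) →
      M.colC c t' = M.colC d t' := by
    intro t' hin
    obtain ⟨ihq, ihp, iht⟩ := M.local_inv c d hq (hc0.trans hd0.symm) ht t' hin
    by_cases hpos : M.pos t' c = 0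
    · rw [M.colC_of_pos_eq c t' hpos, M.colC_of_pos_eq d t' (by rw [pos, ← ihp]; exact hpos),
        iht 0 h0win, ihq]
    · rw [M.colC_of_pos_ne c t' hpos, M.colC_of_pos_ne d t' (by rw [pos, ← ihp]; exact hpos),
        iht 0 h0win]
  by_cases hall : ∀ s, M.pos s c ∈ Set.Icc (-(N:ℤ)) N
  · exact hsame t (fun s _ => hall s)
  · push_neg at hall
    set E := Nat.find hall with hE
    have hEspec : M.pos E c ∉ Set.Icc (-(N:ℤ)) N := Nat.find_spec hall
    have hEmin : ∀ s, s < E → M.pos s c ∈ Set.Icc (-(N:ℤ)) N :=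
      fun s hs => not_not.mp (Nat.find_min hall hs)
    rcases le_or_gt t E with hle | hgt
    · exact hsame t (fun s hs => hEmin s (by omega))
    · obtain ⟨ihq, ihp, iht⟩ := M.local_inv c d hq (hc0.trans hd0.symm) ht E hEmin
      have hd_pos : ∀ t', t' ≤ E → M.pos t' d = M.pos t' c := by
        intro t' h'
        obtain ⟨_, ihp', _⟩ := M.local_inv c d hq (hc0.trans hd0.symm) ht t'
          (fun s hs => hEmin s (by omega))
        rw [pos, pos, ihp']
      have hcon_c := M.confine hz c hc0 E hEspec hEmin
      have hcon_d := M.confine hz d hd0 E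
        (by rw [hd_pos E le_rfl]; exact hEspec)
        (fun s hs => by rw [hd_pos s (by omega)]; exact hEmin s hs)
      have hfc : ((M.step)^[t] c).1 0 = ((M.step)^[E] c).1 0 :=
        M.tape_freeze c 0 E t (le_of_lt hgt) (fun s h1 _ => hcon_c s h1)
      have hfd : ((M.step)^[t] d).1 0 = ((M.step)^[E] d).1 0 :=
        M.tape_freeze d 0 E t (le_of_lt hgt) (fun s h1 _ => hcon_d s h1)
      rw [M.colC_of_pos_ne c t (hcon_c t (by omega)), M.colC_of_pos_ne d t (hcon_d t (by omega)),
        hfc, hfd, iht 0 h0win]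

/-- The window datum at the head (assumed at position 0): window contents and state. -/
def vtx (N : ℕ) (c : Config A Q) : (Fin (2 * N + 1) → A) × Q :=
  (fun k => c.1 ((k : ℤ) - N), c.2.1)

/-- Tape letter of a vertex at cell `0`. -/
def bv {N : ℕ} (v : (Fin (2 * N + 1) → A) × Q) : A := v.1 ⟨N, by omega⟩

/-- The canonical configuration with given window and state, head at `0`. -/
def cfg {N : ℕ} (v : (Fin (2 * N + 1) → A) × Q) : Config A Q :=
  (fun k => if h : 0 ≤ k + (N:ℤ) ∧ k ≤ (N:ℤ) then v.1 ⟨(k + (N:ℤ)).toNat, by omega⟩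
    else v.1 ⟨N, by omega⟩, v.2, 0)

lemma cfg_apply {N : ℕ} (v : (Fin (2 * N + 1) → A) × Q) (k : ℤ) (h1 : 0 ≤ k + (N:ℤ))
    (h2 : k ≤ (N:ℤ)) :
    (cfg v).1 k = v.1 ⟨(k + (N:ℤ)).toNat, by omega⟩ := dif_pos ⟨h1, h2⟩

lemma cfg_agree {N : ℕ} (c : Config A Q) (k : ℤ) (hk : k ∈ Set.Icc (-(N:ℤ)) N) :
    (cfg (vtx N c)).1 k = c.1 k := by
  obtain ⟨h1, h2⟩ := hk
  rw [cfg_apply _ k (by omega) h2]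
  show c.1 ((((k + (N:ℤ)).toNat : ℕ) : ℤ) - (N:ℤ)) = c.1 k
  have h3 : (((k + (N:ℤ)).toNat : ℕ) : ℤ) - (N:ℤ) = k := by omega
  rw [h3]

lemma bv_vtx {N : ℕ} (c : Config A Q) : bv (vtx N c) = c.1 0 := by
  show c.1 (((N:ℕ) : ℤ) - (N:ℤ)) = c.1 0
  have h3 : ((N:ℕ) : ℤ) - (N:ℤ) = 0 := by omega
  rw [h3]

/-- Column generated from a vertex. -/
noncomputable def om (N : ℕ) (v : (Fin (2 * N + 1) → A) × Q) : ℕ → Cell A Q :=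
  fun t => M.colC (cfg v) t

lemma colC_eq_om (hz : M.ZZ N) (c : Config A Q) (hc0 : c.2.2 = 0) (t : ℕ) :
    M.colC c t = M.om N (vtx N c) t :=
  M.colC_agree hz c (cfg (vtx N c)) hc0 rfl rfl
    (fun k hk => (cfg_agree c k hk).symm) t

lemma om_zero (hz : M.ZZ N) (v : (Fin (2 * N + 1) → A) × Q) :
    M.om N v 0 = Sum.inr (bv v, v.2) := by
  rw [om, M.colC_of_pos_eq (cfg v) 0 rfl]
  show Sum.inr ((cfg v).1 0, v.2) = _
  rw [cfg_apply v 0 (by omega) (by omega)]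
  have : (⟨((0:ℤ) + (N:ℤ)).toNat, by omega⟩ : Fin (2 * N + 1)) = ⟨N, by omega⟩ := by
    apply Fin.ext
    show ((0:ℤ) + (N:ℤ)).toNat = N
    omega
  rw [this]
  rfl

/-- The set of realizable waiting times into a vertex. -/
def Rset (N : ℕ) (v : (Fin (2 * N + 1) → A) × Q) : Set ℕ :=
  {k | ∃ c : Config A Q, (∀ t, t < k → M.pos t c ≠ 0) ∧ M.pos k c = 0 ∧
    vtx N ((M.step)^[k] c) = v}

lemma Rset_dc (N : ℕ) (v : (Fin (2 * N + 1) → A) × Q) {k k' : ℕ} (hk' : k' ≤ k)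
    (hk : k ∈ M.Rset N v) : k' ∈ M.Rset N v := by
  obtain ⟨c, h1, h2, h3⟩ := hk
  refine ⟨(M.step)^[k - k'] c, ?_, ?_, ?_⟩
  · intro t ht
    show ((M.step)^[t] ((M.step)^[k - k'] c)).2.2 ≠ 0
    rw [← Function.iterate_add_apply]
    exact h1 (t + (k - k')) (by omega)
  · show ((M.step)^[k'] ((M.step)^[k - k'] c)).2.2 = 0
    rw [← Function.iterate_add_apply, show k' + (k - k') = k by omega]
    exact h2
  · rw [← Function.iterate_add_apply, show k' + (k - k') = k by omega]
    exact h3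

lemma om_evper (hz : M.ZZ N) [Fintype A] [Fintype Q] (v : (Fin (2 * N + 1) → A) × Q) :
    ∃ m p : ℕ, 0 < p ∧ ∀ t, m ≤ t → M.om N v (t + p) = M.om N v t := by
  classical
  set c := (cfg v : Config A Q) with hc
  by_cases hall : ∀ s, M.pos s c ∈ Set.Icc (-(N:ℤ)) N
  · -- head stays in the window forever: finitely many configurations
    have houts : ∀ t k, k ∉ Set.Icc (-(N:ℤ)) N → ((M.step)^[t] c).1 k = c.1 k := by
      intro t k hk
      exact M.tape_freeze c k 0 t (by omega) (fun s _ _ hh => hk (hh ▸ hall s)) 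
    set g : ℕ → ((Fin (2 * N + 1) → A) × Q × Fin (2 * N + 1)) := fun t =>
      (fun k => ((M.step)^[t] c).1 ((k : ℤ) - N), ((M.step)^[t] c).2.1,
        ⟨min (M.pos t c + N).toNat (2 * N), by omega⟩) with hg
    obtain ⟨t1, t2, hne, heq⟩ := Finite.exists_ne_map_eq_of_infinite g
    wlog hlt : t1 < t2 generalizing t1 t2
    · exact this t2 t1 hne.symm heq.symm (by omega)
    have m1 := hall t1; have m2 := hall t2
    simp only [Set.mem_Icc] at m1 m2
    have hconf : (M.step)^[t2] c = (M.step)^[t1] c := by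
      have hpos : M.pos t2 c = M.pos t1 c := by
        have e1 := congrArg (fun z => (z.2.2 : Fin (2*N+1)).val) heq
        simp only [hg] at e1
        omega
      have hq : ((M.step)^[t2] c).2.1 = ((M.step)^[t1] c).2.1 := by
        have e2 := congrArg (fun z => z.2.1) heq
        simp only [hg] at e2
        exact e2.symm
      have htape : ((M.step)^[t2] c).1 = ((M.step)^[t1] c).1 := by
        funext k
        by_cases hk : k ∈ Set.Icc (-(N:ℤ)) N
        · simp only [Set.mem_Icc] at hk
          have e3 := congrFun (congrArg Prod.fst heq) ⟨(k + (N:ℤ)).toNat, by omega⟩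
          simp only [hg] at e3
          have harg : ((((k + (N:ℤ)).toNat : ℕ) : ℤ)) - (N:ℤ) = k := by omega
          rw [harg] at e3
          exact e3.symm
        · rw [houts t2 k hk, houts t1 k hk]
      exact Prod.ext htape (Prod.ext hq hpos)
    refine ⟨t1, t2 - t1, by omega, fun t ht => ?_⟩
    have : (M.step)^[t + (t2 - t1)] c = (M.step)^[t] c := by
      have h1 : t + (t2 - t1) = (t - t1) + t2 := by omega
      have h2 : t = (t - t1) + t1 := by omega
      rw [h1, Function.iterate_add_apply, hconf, ← Function.iterate_add_apply, ← h2]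
    rw [om, om, colC, colC, this]
  · push_neg at hall
    set E := Nat.find hall with hE
    have hEspec := Nat.find_spec hall
    have hEmin : ∀ s, s < E → M.pos s c ∈ Set.Icc (-(N:ℤ)) N :=
      fun s hs => not_not.mp (Nat.find_min hall hs)
    have hcon := M.confine hz c rfl E hEspec hEmin
    refine ⟨E, 1, by omega, fun t ht => ?_⟩
    rw [om, om, M.colC_of_pos_ne c (t+1) (hcon (t+1) (by omega)),
      M.colC_of_pos_ne c t (hcon t (by omega)), M.tape_succ c t 0 (hcon t (by omega))]

/-- Constant headless words. -/
def L0 (A Q : Type*) : Set (List (Cell A Q)) := {w | ∃ b : A, ∀ cl ∈ w, cl = Sum.inl b}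

/-- Words consisting of a realizable waiting period followed by a prefix of the
column generated by a vertex. -/
def LV (N : ℕ) (v : (Fin (2 * N + 1) → A) × Q) : Set (List (Cell A Q)) :=
  {w | ∃ k ∈ M.Rset N v, ∃ n : ℕ,
    w = List.replicate k (Sum.inl (bv v)) ++ List.ofFn (fun j : Fin n => M.om N v j)}

lemma langSH_eq (hz : M.ZZ N) :
    M.langSH = (L0 A Q ∪ ⋃ v : (Fin (2 * N + 1) → A) × Q, M.LV N v : Set (List (Cell A Q))) := by
  classical
  ext w
  constructor
  · rintro ⟨x, hx, m, hw⟩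
    rcases XH_cases x hx with hh | ⟨c, rfl⟩
    · left
      rcases h0 : x 0 with b | p
      · refine ⟨b, fun cl hcl => ?_⟩
        obtain ⟨⟨j, hj⟩, rfl⟩ := List.mem_iff_get.mp hcl
        rw [hw j hj, M.tauH_headless x hh, h0]
      · exact absurd ⟨p, h0⟩ (hh 0)
    · have hcol : ∀ j (hj : j < w.length), w.get ⟨j, hj⟩ = M.colC ((M.step)^[m] c) j := by
        intro j hj
        rw [hw j hj, M.tauH_embed, M.colC_shift]
      set c' := (M.step)^[m] c with hc'
      by_cases hvis : ∃ j, j < w.length ∧ M.pos j c' = 0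
      · right
        set k := Nat.find hvis with hkdef
        obtain ⟨hklen, hk0⟩ := Nat.find_spec hvis
        have hkmin : ∀ t, t < k → M.pos t c' ≠ 0 := by
          intro t ht hp0
          exact (Nat.find_min hvis ht) ⟨by omega, hp0⟩
        set v := vtx N ((M.step)^[k] c') with hv
        refine Set.mem_iUnion.mpr ⟨v, k, ⟨c', hkmin, hk0, rfl⟩, w.length - k, ?_⟩
        have hbv : bv v = ((M.step)^[k] c').1 0 := bv_vtx _
        apply List.ext_get
        · simp; omega
        · intro j h1 h2
          rw [hcol j h1]
          rcases Nat.lt_or_ge j k with hjk | hjk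
          · rw [List.get_eq_getElem, List.getElem_append_left (by simp; omega),
              List.getElem_replicate]
            rw [M.colC_of_pos_ne c' j (hkmin j hjk), hbv,
              M.tape_freeze c' 0 j k (by omega) (fun s hs1 hs2 => hkmin s hs2)]
          · rw [List.get_eq_getElem, List.getElem_append_right (by simp; omega)]
            rw [List.getElem_ofFn]
            have hj' : j = k + (j - k) := by omega
            have hL : M.colC c' j = M.om N v (j - k) := by
              conv_lhs => rw [hj']
              rw [M.colC_shift, M.colC_eq_om hz _ hk0]
            rw [hL]
            congr 1
            simp
      · left
        push_neg at hvis
        refine ⟨c'.1 0, fun cl hcl => ?_⟩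
        obtain ⟨⟨j, hj⟩, rfl⟩ := List.mem_iff_get.mp hcl
        rw [hcol j hj, M.colC_of_pos_ne c' j (hvis j hj),
          M.tape_freeze c' 0 0 j (by omega) (fun s _ hs2 => hvis s (by omega))]
        rfl
  · rintro (⟨b, hb⟩ | hw)
    · refine ⟨fun _ => Sum.inl b, ?_, 0, ?_⟩
      · intro i hi
        obtain ⟨p, hp⟩ := hi
        exact absurd hp (by simp)
      · intro j hj
        rw [M.tauH_headless _ (fun i ⟨p, hp⟩ => by simp at hp)]
        exact hb _ (List.get_mem _ _)
    · obtain ⟨v, k, ⟨c, hno, hk0, hvtx⟩, n, rfl⟩ := Set.mem_iUnion.mp hw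
      refine ⟨embed c, XHmem_embed c, 0, ?_⟩
      intro j hj
      rw [M.tauH_embed]
      have hzadd : 0 + j = j := by omega
      rw [hzadd]
      rcases Nat.lt_or_ge j k with hjk | hjk
      · rw [List.get_eq_getElem, List.getElem_append_left (by simp; omega),
          List.getElem_replicate]
        rw [M.colC_of_pos_ne c j (hno j hjk),
          ← M.tape_freeze c 0 j k (by omega) (fun s hs1 hs2 => hno s hs2), ← hvtx, bv_vtx]
      · rw [List.get_eq_getElem, List.getElem_append_right (by simp; omega),
          List.getElem_ofFn]
        have hj' : j = k + (j - k) := by omega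
        have hL : M.colC c j = M.om N v (j - k) := by
          conv_lhs => rw [hj']
          rw [M.colC_shift, M.colC_eq_om hz _ hk0, hvtx]
        rw [hL]
        congr 1
        simp

end TuringMachine

section Automata

open Classical in
lemma isRegular_union {α : Type*} {L1 L2 : Language α}
    (h1 : L1.IsRegular) (h2 : L2.IsRegular) :
    Language.IsRegular (L1 ∪ L2 : Set (List α)) := by
  obtain ⟨σ1, f1, M1, rfl⟩ := h1
  obtain ⟨σ2, f2, M2, rfl⟩ := h2
  refine ⟨σ1 × σ2, inferInstance,
    ⟨fun s a => (M1.step s.1 a, M2.step s.2 a), (M1.start, M2.start),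
      {s | s.1 ∈ M1.accept ∨ s.2 ∈ M2.accept}⟩, ?_⟩
  have key : ∀ (w : List α) (s1 : σ1) (s2 : σ2),
      DFA.evalFrom ⟨fun s a => (M1.step s.1 a, M2.step s.2 a), (M1.start, M2.start),
        {s | s.1 ∈ M1.accept ∨ s.2 ∈ M2.accept}⟩ (s1, s2) w
        = (M1.evalFrom s1 w, M2.evalFrom s2 w) := by
    intro w
    induction w with
    | nil => intro s1 s2; rfl
    | cons a w ih => intro s1 s2; exact ih (M1.step s1 a) (M2.step s2 a)
  ext w
  show _ ∈ DFA.accepts _ ↔ _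
  rw [DFA.mem_accepts]
  show DFA.evalFrom _ (M1.start, M2.start) w ∈ _ ↔ _
  rw [key]
  constructor
  · rintro (h | h)
    · exact Or.inl h
    · exact Or.inr h
  · rintro (h | h)
    · exact Or.inl h
    · exact Or.inr h

lemma isRegular_empty {α : Type*} : Language.IsRegular (∅ : Set (List α)) := by
  refine ⟨Unit, inferInstance, ⟨fun _ _ => (), (), ∅⟩, ?_⟩
  ext w
  constructor
  · intro h
    exact h
  · intro h
    exact absurd h (Set.notMem_empty w)

lemma isRegular_biUnion {α ι : Type*} (L : ι → Set (List α)) (s : Finset ι)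
    (h : ∀ i, Language.IsRegular (L i : Language α)) :
    Language.IsRegular (⋃ i ∈ s, L i : Set (List α)) := by
  classical
  induction s using Finset.induction_on with
  | empty => simpa using isRegular_empty
  | insert _ _ hni ih =>
      rename_i a s
      have : (⋃ i ∈ insert a s, L i) = L a ∪ ⋃ i ∈ s, L i := by
        simp [Set.biUnion_insert]
      rw [this]
      exact isRegular_union (h a) ih

lemma isRegular_iUnion {α : Type*} {ι : Type*} [Fintype ι] (L : ι → Set (List α))
    (h : ∀ i, Language.IsRegular (L i : Language α)) :
    Language.IsRegular (⋃ i, L i : Set (List α)) := by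
  have : (⋃ i, L i) = ⋃ i ∈ (Finset.univ : Finset ι), L i := by simp
  rw [this]
  exact isRegular_biUnion L Finset.univ h

open Classical in
lemma isRegular_const {α : Type*} (c : α) :
    Language.IsRegular ({w | ∀ cl ∈ w, cl = c} : Set (List α)) := by
  classical
  refine ⟨Bool, inferInstance,
    ⟨fun st a => if a = c then st else false, true, {true}⟩, ?_⟩
  have keyF : ∀ (w : List α),
      DFA.evalFrom ⟨fun st a => if a = c then st else false, true, {true}⟩ false w = false := by
    intro w
    induction w with
    | nil => rfl
    | cons a w ih =>
        show DFA.evalFrom _ (if a = c then false else false) w = false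
        rw [ite_self]
        exact ih
  have key : ∀ (w : List α),
      DFA.evalFrom ⟨fun st a => if a = c then st else false, true, {true}⟩ true w = true
        ↔ ∀ cl ∈ w, cl = c := by
    intro w
    induction w with
    | nil => simp [DFA.evalFrom]
    | cons a w ih =>
        by_cases ha : a = c
        · show DFA.evalFrom _ (if a = c then true else false) w = true ↔ _
          rw [if_pos ha, ih]
          simp [ha]
        · show DFA.evalFrom _ (if a = c then true else false) w = true ↔ _
          rw [if_neg ha, keyF]
          constructor
          · intro h
            simp at h
          · intro h
            exact absurd (h a List.mem_cons_self) ha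
  ext w
  show _ ∈ DFA.accepts _ ↔ _
  rw [DFA.mem_accepts]
  show DFA.evalFrom _ true w ∈ ({true} : Set Bool) ↔ _
  rw [Set.mem_singleton_iff, key]
  rfl

section WaitPrefix

lemma mod_succ_eq {p : ℕ} (hp : 0 < p) (a : ℕ) :
    (a + 1) % p = if a % p + 1 < p then a % p + 1 else 0 := by
  have h1 : (a + 1) % p = (a % p + 1) % p := by
    conv_lhs => rw [← Nat.div_add_mod a p]
    rw [Nat.add_assoc, Nat.mul_add_mod]
  rw [h1]
  have hq : a % p < p := Nat.mod_lt a hp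
  split_ifs with h
  · exact Nat.mod_eq_of_lt h
  · have h2 : a % p + 1 = p := by omega
    rw [h2, Nat.mod_self]

/-- Index tracking an eventually periodic position. -/
def widx (m p : ℕ) (hp : 0 < p) (n : ℕ) : Fin (m + p) :=
  if h : n < m + p then ⟨n, h⟩
  else ⟨m + (n - m) % p, by have := Nat.mod_lt (n - m) hp; omega⟩

/-- Successor on tracked indices. -/
def wnxt (m p : ℕ) (hp : 0 < p) (j : Fin (m + p)) : Fin (m + p) :=
  if h : (j : ℕ) + 1 < m + p then ⟨(j : ℕ) + 1, h⟩ else ⟨m, by omega⟩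

lemma widx_succ (m p : ℕ) (hp : 0 < p) (n : ℕ) :
    widx m p hp (n + 1) = wnxt m p hp (widx m p hp n) := by
  unfold widx wnxt
  rcases lt_trichotomy (n + 1) (m + p) with h | h | h
  · rw [dif_pos (by omega : n < m + p), dif_pos h]
    simp only []
    rw [dif_pos (by exact h)]
  · rw [dif_pos (show n < m + p by omega), dif_neg (show ¬ n + 1 < m + p by omega)]
    rw [dif_neg (show ¬ n + 1 < m + p by omega)]
    apply Fin.ext
    show m + (n + 1 - m) % p = m
    have h2 : n + 1 - m = p := by omega
    rw [h2, Nat.mod_self]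
    omega
  · rw [dif_neg (show ¬ n + 1 < m + p by omega), dif_neg (show ¬ n < m + p by omega)]
    have h3 : n + 1 - m = (n - m) + 1 := by omega
    have hmod : (n - m) % p < p := Nat.mod_lt _ hp
    apply Fin.ext
    by_cases h4 : (n - m) % p + 1 < p
    · rw [dif_pos (show (⟨m + (n - m) % p, by omega⟩ : Fin (m+p)).1 + 1 < m + p by
        simp only []; omega)]
      show m + (n + 1 - m) % p = m + (n - m) % p + 1
      rw [h3, mod_succ_eq hp, if_pos h4]
      omega
    · rw [dif_neg (show ¬ (⟨m + (n - m) % p, by omega⟩ : Fin (m+p)).1 + 1 < m + p by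
        simp only []; omega)]
      show m + (n + 1 - m) % p = m
      rw [h3, mod_succ_eq hp, if_neg h4]
      omega

lemma s_widx {α : Type*} (m p : ℕ) (hp : 0 < p) (s : ℕ → α)
    (hper : ∀ t, m ≤ t → s (t + p) = s t) (n : ℕ) :
    s ((widx m p hp n : Fin (m + p)) : ℕ) = s n := by
  induction n using Nat.strong_induction_on with
  | _ n ih =>
    by_cases h : n < m + p
    · rw [widx, dif_pos h]
    · have h1 : s n = s (n - p) := by
        have h2 := hper (n - p) (by omega)
        rw [show n - p + p = n by omega] at h2
        exact h2
      have h2 : widx m p hp n = widx m p hp (n - p) := by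
        unfold widx
        rcases Nat.lt_or_ge (n - p) (m + p) with hh | hh
        · rw [dif_neg h, dif_pos hh]
          apply Fin.ext
          show m + (n - m) % p = n - p
          have h3 : n - m = (n - p - m) + p := by omega
          rw [h3, Nat.add_mod_right, Nat.mod_eq_of_lt (by omega)]
          omega
        · rw [dif_neg h, dif_neg (by omega)]
          apply Fin.ext
          show m + (n - m) % p = m + (n - p - m) % p
          have h3 : n - m = (n - p - m) + p := by omega
          rw [h3, Nat.add_mod_right]
      rw [h2, ih (n - p) (by omega)]
      exact h1.symm

end WaitPrefix

section WPD

variable {α : Type*}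

open Classical in
/-- DFA recognizing a waiting period followed by a prefix of an eventually
periodic sequence. -/
noncomputable def wpDFA (c : α) (R : Set ℕ) (s : ℕ → α) (K m p : ℕ) (hp : 0 < p) :
    DFA α (Option (Fin (K + 1) ⊕ Fin (m + p))) where
  step := fun st a =>
    match st with
    | none => none
    | some (Sum.inl j) =>
        if a = c then some (Sum.inl ⟨min ((j : ℕ) + 1) K, by omega⟩)
        else if (j : ℕ) ∈ R ∧ a = s 0 then some (Sum.inr (widx m p hp 1)) else none
    | some (Sum.inr i) =>
        if a = s (i : ℕ) then some (Sum.inr (wnxt m p hp i)) else none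
  start := some (Sum.inl ⟨0, by omega⟩)
  accept := {st | (∃ j : Fin (K + 1), st = some (Sum.inl j) ∧ (j : ℕ) ∈ R) ∨
    ∃ i : Fin (m + p), st = some (Sum.inr i)}

variable (c : α) (R : Set ℕ) (s : ℕ → α) (K m p : ℕ) (hp : 0 < p)

lemma wpDFA_none : ∀ w : List α, (wpDFA c R s K m p hp).evalFrom none w = none := by
  intro w
  induction w with
  | nil => rfl
  | cons a w ih => exact ih

lemma wpDFA_wait : ∀ (n : ℕ) (j : Fin (K + 1)),
    (wpDFA c R s K m p hp).evalFrom (some (Sum.inl j)) (List.replicate n c)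
      = some (Sum.inl ⟨min ((j : ℕ) + n) K, by omega⟩) := by
  intro n
  induction n with
  | zero =>
      intro j
      show some (Sum.inl j) = _
      congr 1
      congr 1
      apply Fin.ext
      show (j : ℕ) = min ((j : ℕ) + 0) K
      have := j.2
      omega
  | succ n ih =>
      intro j
      show (wpDFA c R s K m p hp).evalFrom
        ((wpDFA c R s K m p hp).step (some (Sum.inl j)) c) (List.replicate n c) = _
      have hstep : (wpDFA c R s K m p hp).step (some (Sum.inl j)) c
          = some (Sum.inl ⟨min ((j : ℕ) + 1) K, by omega⟩) := if_pos rfl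
      rw [hstep, ih]
      congr 1
      congr 1
      apply Fin.ext
      show min ((min ((j:ℕ) + 1) K) + n) K = min ((j:ℕ) + (n + 1)) K
      omega

open Classical in
lemma wpDFA_run (hper : ∀ t, m ≤ t → s (t + p) = s t) : ∀ (w : List α) (t : ℕ),
    (wpDFA c R s K m p hp).evalFrom (some (Sum.inr (widx m p hp t))) w
      = if (∀ (j : ℕ) (h : j < w.length), w.get ⟨j, h⟩ = s (t + j)) then
          some (Sum.inr (widx m p hp (t + w.length))) else none := by
  classical
  intro w
  induction w with
  | nil =>
      intro t
      rw [if_pos (by intro j h; exact absurd h (by simp))]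
      show some (Sum.inr (widx m p hp t)) = some (Sum.inr (widx m p hp (t + ([] : List α).length)))
      rfl
  | cons a w ih =>
      intro t
      show (wpDFA c R s K m p hp).evalFrom
        ((wpDFA c R s K m p hp).step (some (Sum.inr (widx m p hp t))) a) w = _
      by_cases ha : a = s t
      · have hstep : (wpDFA c R s K m p hp).step (some (Sum.inr (widx m p hp t))) a
            = some (Sum.inr (widx m p hp (t + 1))) := by
          show (if a = s ((widx m p hp t : Fin (m + p)) : ℕ) then _ else _) = _
          rw [s_widx m p hp s hper t, if_pos ha, ← widx_succ]
        rw [hstep, ih (t + 1)]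
        by_cases hcond : ∀ (j : ℕ) (h : j < w.length), w.get ⟨j, h⟩ = s (t + 1 + j)
        · rw [if_pos hcond, if_pos ?side]
          case side =>
            intro j h
            match j with
            | 0 => simpa using ha
            | Nat.succ jj =>
                have := hcond jj (by simpa using h)
                simpa [show t + (jj + 1) = t + 1 + jj by omega] using this
          have harg : t + (a :: w).length = t + 1 + w.length := by
            simp only [List.length_cons]
            omega
          rw [harg]
        · rw [if_neg hcond, if_neg ?side2]
          case side2 =>
            intro hfull
            apply hcond
            intro j h
            have := hfull (j + 1) (by simpa using h)
            simpa [show t + (j + 1) = t + 1 + j by omega] using this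
      · have hstep : (wpDFA c R s K m p hp).step (some (Sum.inr (widx m p hp t))) a
            = none := by
          show (if a = s ((widx m p hp t : Fin (m + p)) : ℕ) then _ else _) = _
          rw [s_widx m p hp s hper t, if_neg ha]
        rw [hstep, wpDFA_none]
        rw [if_neg]
        intro hfull
        exact ha (by simpa using hfull 0 (by simp))

end WPD

section WPMain

variable {α : Type*}

open Classical in
lemma isRegular_waitPrefix (c : α) (R : Set ℕ) (s : ℕ → α)
    (hs0 : s 0 ≠ c) (K : ℕ) (hK : ∀ k : ℕ, k ∈ R ↔ min k K ∈ R)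
    (m p : ℕ) (hp : 0 < p) (hper : ∀ t, m ≤ t → s (t + p) = s t) :
    Language.IsRegular ({w : List α | ∃ k ∈ R, ∃ n : ℕ,
      w = List.replicate k c ++ List.ofFn (fun j : Fin n => s j)} : Set (List α)) := by
  classical
  have wait0 : ∀ n : ℕ, (wpDFA c R s K m p hp).evalFrom (wpDFA c R s K m p hp).start
      (List.replicate n c) = some (Sum.inl ⟨min n K, by omega⟩) := by
    intro n
    rw [show (wpDFA c R s K m p hp).start = some (Sum.inl (⟨0, by omega⟩ : Fin (K+1))) from rfl,
      wpDFA_wait]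
    congr 1
    congr 1
    apply Fin.ext
    show min (((⟨0, by omega⟩ : Fin (K+1)) : ℕ) + n) K = min n K
    simp
  refine ⟨_, inferInstance, wpDFA c R s K m p hp, ?_⟩
  ext w
  rw [DFA.mem_accepts]
  by_cases hall : ∀ cl ∈ w, cl = c
  · have hw : w = List.replicate w.length c := List.eq_replicate_length.mpr hall
    have heval : (wpDFA c R s K m p hp).eval w = some (Sum.inl ⟨min w.length K, by omega⟩) := by
      show (wpDFA c R s K m p hp).evalFrom _ w = _
      conv_lhs => rw [hw]
      exact wait0 w.length
    rw [show (wpDFA c R s K m p hp).eval w = (wpDFA c R s K m p hp).evalFrom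
      (wpDFA c R s K m p hp).start w from rfl] at heval
    show (wpDFA c R s K m p hp).evalFrom _ w ∈ _ ↔ _
    rw [heval]
    constructor
    · rintro (⟨j, hj, hjR⟩ | ⟨i, hi⟩)
      · have hjj : (⟨min w.length K, by omega⟩ : Fin (K+1)) = j :=
          Sum.inl.inj (Option.some.inj hj)
        have hlenR : w.length ∈ R := (hK w.length).mpr (by rw [← hjj] at hjR; exact hjR)
        refine ⟨w.length, hlenR, 0, ?_⟩
        simpa using hw
      · exact absurd hi (by simp)
    · rintro ⟨k, hk, n, heq⟩
      left
      refine ⟨⟨min w.length K, by omega⟩, rfl, ?_⟩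
      have hlen : w.length ∈ R := by
        rcases Nat.eq_zero_or_pos n with rfl | hn
        · have hw2 : w = List.replicate k c := by simpa using heq
          have : w.length = k := by rw [hw2, List.length_replicate]
          rw [this]; exact hk
        · exfalso
          apply hs0
          apply hall
          rw [heq]
          refine List.mem_append.mpr (Or.inr ?_)
          rw [List.mem_ofFn]
          exact ⟨⟨0, hn⟩, rfl⟩
      exact (hK w.length).mp hlen
  · push_neg at hall
    have hbad : ∃ j, j < w.length ∧ w.getD j c ≠ c := by
      obtain ⟨cl, hcl, hne⟩ := hall
      obtain ⟨⟨j, hj⟩, rfl⟩ := List.mem_iff_get.mp hcl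
      refine ⟨j, hj, ?_⟩
      rw [List.getD_eq_getElem _ _ hj]
      simpa [List.get_eq_getElem] using hne
    obtain ⟨k, ⟨hklen, hkbad⟩, hmin⟩ :
        ∃ k, (k < w.length ∧ w.getD k c ≠ c) ∧
          ∀ t, t < k → ¬(t < w.length ∧ w.getD t c ≠ c) :=
      ⟨Nat.find hbad, Nat.find_spec hbad, fun t ht => Nat.find_min hbad ht⟩
    have hkb' : w[k]'hklen ≠ c := by
      rwa [List.getD_eq_getElem _ _ hklen] at hkbad
    have hkmin : ∀ t, t < k → ∀ (ht : t < w.length), w[t]'ht = c := by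
      intro t ht hlt
      have h1 := hmin t ht
      push_neg at h1
      have h2 := h1 (by omega)
      rwa [List.getD_eq_getElem _ _ hlt] at h2
    -- decomposition of w
    have hdec : w = List.replicate k c ++ (w[k]'hklen :: w.drop (k+1)) := by
      conv_lhs => rw [← List.take_append_drop k w]
      congr 1
      · apply List.ext_get
        · simp [List.length_take]; omega
        · intro j h1 h2
          rw [List.get_eq_getElem, List.get_eq_getElem, List.getElem_take,
            List.getElem_replicate]
          have hjlen : j < w.length := by
            rw [List.length_take] at h1
            omega
          exact hkmin j (by simpa using h2) hjlen
      · exact List.drop_eq_getElem_cons hklen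
    -- characterization of membership
    have hchar : w ∈ {w : List α | ∃ k ∈ R, ∃ n : ℕ,
        w = List.replicate k c ++ List.ofFn (fun j : Fin n => s j)} →
        k ∈ R ∧ w[k]'hklen = s 0 ∧
          ∀ (j : ℕ) (h : j < (w.drop (k+1)).length),
            (w.drop (k+1)).get ⟨j, h⟩ = s (1 + j) := by
      rintro ⟨k', hk', n, heq⟩
      have hlen : w.length = k' + n := by rw [heq]; simp
      have hkk : k' = k := by
        rcases lt_trichotomy k' k with h | h | h
        · exfalso
          rcases Nat.eq_zero_or_pos n with rfl | hn
          · omega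
          · have hk'len : k' < w.length := by omega
            have h1 : w[k']'hk'len = c := hkmin k' h hk'len
            have h2 : w[k']'hk'len = s 0 := by
              rw [List.getElem_of_eq heq hk'len,
                List.getElem_append_right (by simp)]
              simp
            exact hs0 (h2.symm.trans h1)
        · exact h
        · exfalso
          apply hkb'
          rw [List.getElem_of_eq heq hklen,
            List.getElem_append_left (show k < (List.replicate k' c).length by
              rw [List.length_replicate]; exact h),
            List.getElem_replicate]
      subst hkk
      have hn : 0 < n := by omega
      refine ⟨hk', ?_, ?_⟩
      · rw [List.getElem_of_eq heq hklen, List.getElem_append_right (by simp)]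
        simp
      · intro j h
        have hdlen : (w.drop (k'+1)).length = w.length - (k'+1) := by simp
        have hjw : k' + 1 + j < w.length := by omega
        rw [List.get_eq_getElem, List.getElem_drop]
        rw [List.getElem_of_eq heq hjw, List.getElem_append_right (by simp; omega)]
        rw [List.getElem_ofFn]
        congr 1
        simp
        omega
    have heval0 : (wpDFA c R s K m p hp).evalFrom (wpDFA c R s K m p hp).start w
        = (wpDFA c R s K m p hp).evalFrom
            ((wpDFA c R s K m p hp).step (some (Sum.inl ⟨min k K, by omega⟩)) (w[k]'hklen))
            (w.drop (k+1)) := by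
      conv_lhs => rw [hdec]
      rw [DFA.evalFrom_of_append, wait0 k]
      rfl
    show (wpDFA c R s K m p hp).evalFrom _ w ∈ _ ↔ _
    rw [heval0]
    by_cases hcond : k ∈ R ∧ w[k]'hklen = s 0
    · have hstep : (wpDFA c R s K m p hp).step
          (some (Sum.inl ⟨min k K, by omega⟩)) (w[k]'hklen)
          = some (Sum.inr (widx m p hp 1)) := by
        show (if w[k]'hklen = c then _
          else if ((⟨min k K, by omega⟩ : Fin (K+1)) : ℕ) ∈ R ∧ w[k]'hklen = s 0
            then _ else _) = _
        rw [if_neg hkb', if_pos ⟨(hK k).mp hcond.1, hcond.2⟩]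
      rw [hstep, wpDFA_run c R s K m p hp hper]
      by_cases hmatch : ∀ (j : ℕ) (h : j < (w.drop (k+1)).length),
          (w.drop (k+1)).get ⟨j, h⟩ = s (1 + j)
      · rw [if_pos hmatch]
        constructor
        · intro _
          refine ⟨k, hcond.1, w.length - k, ?_⟩
          apply List.ext_get
          · simp; omega
          · intro j h1 h2
            rw [List.get_eq_getElem, List.get_eq_getElem]
            rcases Nat.lt_or_ge j k with hj | hj
            · rw [List.getElem_append_left (by simpa using hj), List.getElem_replicate]
              exact hkmin j hj h1
            · rw [List.getElem_append_right (by simpa using hj), List.getElem_ofFn]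
              rcases Nat.eq_or_lt_of_le hj with rfl | hjk
              · simpa using hcond.2
              · have h3 : w[j]'h1 = s (1 + (j - k - 1)) := by
                  have h4 := hmatch (j - k - 1) (by rw [List.length_drop]; omega)
                  rw [List.get_eq_getElem, List.getElem_drop] at h4
                  convert h4 using 2
                  simp only [Fin.val_mk]
                  omega
                simp only [Fin.val_mk, List.length_replicate]
                rw [h3]
                congr 1
                omega
        · intro _
          exact Or.inr ⟨_, rfl⟩
      · rw [if_neg hmatch]
        constructor
        · rintro (⟨j, hj, _⟩ | ⟨i, hi⟩)
          · exact absurd hj (by simp)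
          · exact absurd hi (by simp)
        · intro hmem
          exact absurd (hchar hmem).2.2 hmatch
    · have hstep : (wpDFA c R s K m p hp).step
          (some (Sum.inl ⟨min k K, by omega⟩)) (w[k]'hklen) = none := by
        show (if w[k]'hklen = c then _
          else if ((⟨min k K, by omega⟩ : Fin (K+1)) : ℕ) ∈ R ∧ w[k]'hklen = s 0
            then _ else _) = _
        rw [if_neg hkb', if_neg (by
          intro hcc
          exact hcond ⟨(hK k).mpr hcc.1, hcc.2⟩)]
      rw [hstep, wpDFA_none]
      constructor
      · rintro (⟨j, hj, _⟩ | ⟨i, hi⟩)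
        · exact absurd hj (by simp)
        · exact absurd hi (by simp)
      · intro hmem
        obtain ⟨h1, h2, _⟩ := hchar hmem
        exact (hcond ⟨h1, h2⟩).elim

end WPMain

lemma exists_cap (R : Set ℕ) (hdc : ∀ k k' : ℕ, k' ≤ k → k ∈ R → k' ∈ R) :
    ∃ K, ∀ k, k ∈ R ↔ min k K ∈ R := by
  classical
  by_cases h : ∃ r, r ∉ R
  · refine ⟨Nat.find h, fun k => ?_⟩
    rcases Nat.lt_or_ge k (Nat.find h) with hk | hk
    · rw [min_eq_left (by omega)]
    · rw [min_eq_right hk]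
      constructor
      · intro hkR
        exact hdc k (Nat.find h) hk hkR
      · intro hKR
        exact absurd hKR (Nat.find_spec h)
  · push_neg at h
    exact ⟨0, fun k => iff_of_true (h k) (h _)⟩

end Automata

end Aux

/-- For a bounded-zigzag machine (for some N, no left or right zigzag of width
greater than N), the column subshift S_H is sofic: its language of finite
factors is regular. -/
theorem langSH_regular_of_bounded_zigzag
    {A Q : Type*} [Fintype A] [Fintype Q]
    (M : TuringMachine A Q)
    (hzz : ∃ N : ℕ, ∀ (x : TuringMachine.Config A Q) (i : ℤ) (W t₁ t₂ : ℕ),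
      N < W → 0 < t₁ → t₁ < t₂ → x.2.2 = i →
      (M.pos t₁ x = i + W ∨ M.pos t₁ x = i - W) → M.pos t₂ x ≠ i) :
    Language.IsRegular M.langSH := by
  classical
  obtain ⟨N, hzz⟩ := hzz
  have hz : M.ZZ N := hzz
  by_cases hA : IsEmpty A
  · refine ⟨Unit, inferInstance, ⟨fun _ _ => (), (), ∅⟩, ?_⟩
    ext w
    constructor
    · intro h
      exact absurd h (Set.notMem_empty _)
    · rintro ⟨x, hx, m, hw⟩
      rcases hx0 : x 0 with a | pq
      · exact (hA.false a).elim
      · exact (hA.false pq.1).elim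
  · have hAne : Nonempty A := not_isEmpty_iff.mp hA
    rw [show M.langSH = _ from M.langSH_eq hz]
    apply isRegular_union
    · have hL0 : TuringMachine.L0 A Q
          = ⋃ b : A, {w : List (TuringMachine.Cell A Q) | ∀ cl ∈ w, cl = Sum.inl b} := by
        ext w
        simp [TuringMachine.L0]
      rw [hL0]
      exact isRegular_iUnion _ (fun b => isRegular_const (Sum.inl b))
    · apply isRegular_iUnion
      intro v
      obtain ⟨K, hK⟩ := exists_cap (M.Rset N v) (fun k k' hle hk => M.Rset_dc N v hle hk)
      obtain ⟨m, p, hp, hper⟩ := M.om_evper hz v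
      have hs0 : M.om N v 0 ≠ Sum.inl (TuringMachine.bv v) := by
        rw [M.om_zero hz v]
        simp
      exact isRegular_waitPrefix (Sum.inl (TuringMachine.bv v)) (M.Rset N v) (M.om N v)
        hs0 K hK m p hp hper
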